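/- arXiv:1204.6712 — 3 statements merged into one kernel-verified Lean document; each statement's English description precedes it below -/
import Mathlib

section
/- For integers 0 ≤ k ≤ n, the limit as t → -(k+1) of (t+k+1)^2 · ((-t)_n)^2 / ((t+1)_{n+1})^2 equals binom(n+k, k)^2 · binom(n, k)^2, where (x)_m denotes the Pochhammer symbol (rising factorial). -/
open Filter Finset Nat

private lemma prodA (n k : ℕ) :
    (∏ i ∈ range n, ((k : ℝ) + 1 + i)) * k ! = (n + k)! := by
  induction n with
  | zero => simp
  | succ n ih =>
    rw [prod_range_succ, mul_right_comm, ih,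
      show n + 1 + k = (n + k) + 1 by omega, Nat.factorial_succ]
    push_cast
    ring

private lemma natprod (k : ℕ) : ∏ i ∈ range k, (k - i) = k ! := by
  calc ∏ i ∈ range k, (k - i) = ∏ i ∈ range k, (i + 1) := by
        rw [← prod_range_reflect]
        exact prod_congr rfl fun j hj => by rw [mem_range] at hj; omega
    _ = k ! := prod_range_add_one_eq_factorial k

private lemma prodK (k : ℕ) : ∏ i ∈ range k, ((i : ℝ) - k) = (-1) ^ k * k ! := by
  have h1 : ∏ i ∈ range k, ((i : ℝ) - k) = ∏ i ∈ range k, (-1 * ((k - i : ℕ) : ℝ)) :=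
    prod_congr rfl fun i hi => by
      rw [mem_range] at hi
      rw [Nat.cast_sub hi.le]; ring
  rw [h1, prod_mul_distrib, prod_const, ← Nat.cast_prod, natprod, card_range]

private lemma prodIco (n k : ℕ) (hk : k ≤ n) :
    ∏ i ∈ Ico (k + 1) (n + 1), ((i : ℝ) - k) = (n - k)! := by
  rw [Finset.prod_Ico_eq_prod_range, show n + 1 - (k + 1) = n - k by omega]
  calc ∏ j ∈ range (n - k), (((k + 1 + j : ℕ) : ℝ) - k) = ∏ j ∈ range (n - k), ((j : ℝ) + 1) :=
        prod_congr rfl fun j _ => by push_cast; ring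
    _ = ((n - k)! : ℝ) := by
        rw [← prod_range_add_one_eq_factorial, Nat.cast_prod]
        push_cast; rfl

private lemma prodB (n k : ℕ) (hk : k ≤ n) :
    ∏ i ∈ (range (n + 1)).erase k, ((i : ℝ) - k) = (-1) ^ k * k ! * (n - k)! := by
  have hsplit : (range (n + 1)).erase k = range k ∪ Ico (k + 1) (n + 1) := by
    ext x; simp only [mem_erase, mem_range, mem_union, mem_Ico]; omega
  have hdisj : Disjoint (range k) (Ico (k + 1) (n + 1)) := by
    rw [Finset.disjoint_left]
    intro x hx hx'
    simp only [mem_range] at hx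
    simp only [mem_Ico] at hx'
    omega
  rw [hsplit, prod_union hdisj, prodK, prodIco n k hk]

theorem pochhammer_double_pole_limit (n k : ℕ) (hk : k ≤ n) :
    Tendsto (fun t : ℝ =>
        (t + k + 1) ^ 2 *
          ((∏ i ∈ range n, (-t + i)) ^ 2 / (∏ i ∈ range (n + 1), (t + 1 + i)) ^ 2))
      (nhdsWithin (-(k + 1 : ℝ)) {x | x ≠ -(k + 1 : ℝ)})
      (nhds (((n + k).choose k : ℝ) ^ 2 * ((n.choose k : ℝ)) ^ 2)) := by
  set t0 : ℝ := -(k + 1 : ℝ) with ht0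
  set g : ℝ → ℝ := fun t =>
    (∏ i ∈ range n, (-t + i)) ^ 2 / (∏ i ∈ (range (n + 1)).erase k, (t + 1 + i)) ^ 2 with hg
  -- denominator of g at t0
  have hden : ∏ i ∈ (range (n + 1)).erase k, (t0 + 1 + i) = (-1) ^ k * k ! * (n - k)! := by
    rw [← prodB n k hk]
    exact prod_congr rfl fun i _ => by rw [ht0]; ring
  have hknz : (k ! : ℝ) ≠ 0 := Nat.cast_ne_zero.mpr k.factorial_ne_zero
  have hnknz : ((n - k)! : ℝ) ≠ 0 := Nat.cast_ne_zero.mpr (n - k).factorial_ne_zero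
  have hnnz : (n ! : ℝ) ≠ 0 := Nat.cast_ne_zero.mpr n.factorial_ne_zero
  have hdnz : ∏ i ∈ (range (n + 1)).erase k, (t0 + 1 + i) ≠ 0 := by
    rw [hden]
    positivity
  -- g is continuous at t0
  have hcont : ContinuousAt g t0 := by
    apply ContinuousAt.div
    · fun_prop
    · fun_prop
    · exact pow_ne_zero 2 hdnz
  -- value of g at t0
  have hnum : ∏ i ∈ range n, (-t0 + i) = ∏ i ∈ range n, ((k : ℝ) + 1 + i) :=
    prod_congr rfl fun i _ => by rw [ht0]; ring
  have hc1 : ((n + k).choose k : ℝ) * (k ! * n !) = (n + k)! := by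
    rw [← mul_assoc]
    have := Nat.choose_mul_factorial_mul_factorial (Nat.le_add_left k n)
    rw [Nat.add_sub_cancel] at this
    exact_mod_cast this
  have hc2 : (n.choose k : ℝ) * (k ! * (n - k)!) = n ! := by
    rw [← mul_assoc]
    exact_mod_cast Nat.choose_mul_factorial_mul_factorial hk
  have hA : ∏ i ∈ range n, ((k : ℝ) + 1 + i) = (n + k)! / k ! :=
    eq_div_of_mul_eq hknz (prodA n k)
  have hval : g t0 = ((n + k).choose k : ℝ) ^ 2 * ((n.choose k : ℝ)) ^ 2 := by
    have hC1 : ((n + k).choose k : ℝ) = (n + k)! / (k ! * n !) :=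
      eq_div_of_mul_eq (by positivity) hc1
    have hC2 : (n.choose k : ℝ) = n ! / (k ! * (n - k)!) :=
      eq_div_of_mul_eq (by positivity) hc2
    rw [hg]
    simp only
    rw [hnum, hden, hA, hC1, hC2]
    have hneg : ((-1 : ℝ) ^ k * k ! * (n - k)!) ^ 2 = (k ! * (n - k)!) ^ 2 := by
      have h1 : ((-1 : ℝ) ^ k) ^ 2 = 1 := by
        rw [← pow_mul, mul_comm, pow_mul]; norm_num
      rw [mul_pow, mul_pow, h1, one_mul, ← mul_pow]
    rw [hneg]
    field_simp
  have htend : Tendsto g (nhdsWithin t0 {x | x ≠ t0})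
      (nhds (((n + k).choose k : ℝ) ^ 2 * ((n.choose k : ℝ)) ^ 2)) := by
    rw [← hval]
    exact hcont.continuousWithinAt
  refine htend.congr' ?_
  filter_upwards [self_mem_nhdsWithin] with t ht
  have ht' : t ≠ t0 := ht
  have hc : t + 1 + k ≠ 0 := by
    intro h
    apply ht'
    rw [ht0]; linarith
  have hsplit : ∏ i ∈ range (n + 1), (t + 1 + i) =
      (t + 1 + k) * ∏ i ∈ (range (n + 1)).erase k, (t + 1 + i) :=
    (Finset.mul_prod_erase _ _ (mem_range.mpr (by omega))).symm
  rw [hg]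
  simp only
  rw [hsplit, mul_pow, show (t + k + 1 : ℝ) = t + 1 + k by ring, ← mul_div_assoc,
    mul_div_mul_left _ _ (pow_ne_zero 2 hc)]
end

section
/- Let a_{k,n} = 2 b_{k,n} (H_{n+k-1} - 2H_k + H_{n-k} - φ(-k-1)) where b_{k,n} = -binom(n+k,k)² binom(n,k)² θ(-k-1), θ(t) = (t + n + ρ)/(t - n + 1) with ρ ∈ ℕ, ρ ≥ 2, and φ(t) = θ'(t)/θ(t). Then for all 0 ≤ k ≤ n: n·b_{k,n} ∈ ℤ and n·lcm(1,...,n)·a_{k,n} ∈ ℤ. -/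
open Finset

/-- A rational number is an integer. -/
def IsIntQ (x : ℚ) : Prop := ∃ z : ℤ, x = z

lemma isIntQ_natCast (m : ℕ) : IsIntQ (m : ℚ) := ⟨m, by push_cast; ring⟩

lemma IsIntQ.add {x y : ℚ} (hx : IsIntQ x) (hy : IsIntQ y) : IsIntQ (x + y) := by
  obtain ⟨z1, rfl⟩ := hx; obtain ⟨z2, rfl⟩ := hy; exact ⟨z1 + z2, by push_cast; ring⟩

lemma IsIntQ.mul {x y : ℚ} (hx : IsIntQ x) (hy : IsIntQ y) : IsIntQ (x * y) := by
  obtain ⟨z1, rfl⟩ := hx; obtain ⟨z2, rfl⟩ := hy; exact ⟨z1 * z2, by push_cast; ring⟩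

lemma IsIntQ.neg {x : ℚ} (hx : IsIntQ x) : IsIntQ (-x) := by
  obtain ⟨z1, rfl⟩ := hx; exact ⟨-z1, by push_cast; ring⟩

lemma IsIntQ.sub {x y : ℚ} (hx : IsIntQ x) (hy : IsIntQ y) : IsIntQ (x - y) := by
  obtain ⟨z1, rfl⟩ := hx; obtain ⟨z2, rfl⟩ := hy; exact ⟨z1 - z2, by push_cast; ring⟩

lemma isIntQ_sum {α : Type*} {s : Finset α} {f : α → ℚ} (h : ∀ i ∈ s, IsIntQ (f i)) :
    IsIntQ (∑ i ∈ s, f i) := by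
  classical
  induction s using Finset.induction with
  | empty => exact ⟨0, by simp⟩
  | insert _ _ hx ih =>
    rw [Finset.sum_insert hx]
    exact (h _ (Finset.mem_insert_self _ _)).add
      (ih fun i hi => h i (Finset.mem_insert_of_mem hi))

lemma isIntQ_div {m d : ℕ} (hdvd : d ∣ m) (hd : d ≠ 0) : IsIntQ ((m : ℚ) / (d : ℚ)) :=
  ⟨(m / d : ℕ), by
    rw [Int.cast_natCast, Nat.cast_div hdvd (Nat.cast_ne_zero.mpr hd)]⟩

lemma aux_n_mul_choose (n k : ℕ) (hn : 1 ≤ n) :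
    n * (n + k).choose k = (n + k) * (n + k - 1).choose k := by
  obtain ⟨m, rfl⟩ := Nat.exists_eq_add_of_le hn
  have h2 : (1 + m + k).choose (m + 1) = (1 + m + k).choose k := by
    rw [← Nat.choose_symm (show k ≤ 1 + m + k by omega)]
    congr 1
    omega
  have h3 : (m + k).choose m = (m + k).choose k := by
    rw [← Nat.choose_symm (show k ≤ m + k by omega)]
    congr 1
    omega
  have h := Nat.add_one_mul_choose_eq (m + k) m
  have e : 1 + m + k - 1 = m + k := by omega
  rw [e, ← h2, ← h3]
  have e2 : 1 + m + k = (m + k) + 1 := by omega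
  rw [e2]
  calc (1 + m) * (m + k + 1).choose (m + 1) = (m + k + 1).choose (m + 1) * (m + 1) := by ring
  _ = (m + k + 1) * (m + k).choose m := by rw [← h]

lemma aux_p_dvd_choose {p a n k i : ℕ} (hp : p.Prime) (hik : i ≤ k) (hkn : k ≤ n)
    (hni : n + i = p ^ a) (hi : 1 ≤ i) : p ∣ (n + k).choose k := by
  have hk_lt : k < p ^ a := by omega
  have hn_lt : n < p ^ a := by omega
  have ha1 : 1 ≤ a := by
    by_contra h
    interval_cases a
    · simp at hni; omega
  have hnk0 : n + k ≠ 0 := by omega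
  have hlog : Nat.log p (n + k) < a + 1 := by
    apply Nat.log_lt_of_lt_pow hnk0
    calc n + k < 2 * p ^ a := by omega
    _ ≤ p * p ^ a := Nat.mul_le_mul_right _ hp.two_le
    _ = p ^ (a + 1) := by ring
  rw [← emultiplicity_ne_zero]
  rw [hp.emultiplicity_choose' hlog]
  simp only [ne_eq, Nat.cast_eq_zero, Finset.card_eq_zero]
  intro hempty
  have ha_mem : a ∈ (Finset.Ico 1 (a + 1)).filter fun j => p ^ j ≤ k % p ^ j + n % p ^ j := by
    simp only [Finset.mem_filter, Finset.mem_Ico]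
    refine ⟨⟨ha1, by omega⟩, ?_⟩
    rw [Nat.mod_eq_of_lt hk_lt, Nat.mod_eq_of_lt hn_lt]
    omega
  rw [hempty] at ha_mem
  exact absurd ha_mem (Finset.notMem_empty a)

lemma aux_key (n k i : ℕ) (hn : 1 ≤ n) (hik : i ≤ k) (hkn : k ≤ n) :
    (n + i) ∣ (Finset.Icc 1 n).lcm id * (n + k).choose k := by
  rw [Nat.dvd_iff_prime_pow_dvd_dvd]
  intro p a hp hpa
  have hp' : p.Prime := hp
  by_cases hle : p ^ a ≤ n
  · have h1 : p ^ a ∣ (Finset.Icc 1 n).lcm id := by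
      have : p ^ a ∈ Finset.Icc 1 n := by
        simp only [Finset.mem_Icc]
        exact ⟨Nat.one_le_pow _ _ hp'.pos, hle⟩
      exact Finset.dvd_lcm (f := id) this
    exact h1.mul_right _
  · push_neg at hle
    have hpa_le : p ^ a ≤ n + i := Nat.le_of_dvd (by omega) hpa
    have hni : n + i = p ^ a := by
      obtain ⟨c, hc⟩ := hpa
      have hc1 : c = 1 := by
        rcases Nat.lt_or_ge c 2 with h2 | h2
        · interval_cases c
          · omega
          · rfl
        · exfalso
          have h3 : p ^ a * 2 ≤ p ^ a * c := Nat.mul_le_mul_left _ h2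
          omega
      subst hc1
      omega
    have hi1 : 1 ≤ i := by omega
    have ha1 : 1 ≤ a := by
      by_contra h
      interval_cases a
      · simp at hni; omega
    have hsplit : p ^ a = p ^ (a - 1) * p := by
      rw [← pow_succ]
      congr 1
      omega
    have hle2 : p ^ (a - 1) ≤ n := by
      have hpp : p ^ (a - 1) * 2 ≤ p ^ (a - 1) * p := Nat.mul_le_mul_left _ hp'.two_le
      omega
    have h1 : p ^ (a - 1) ∣ (Finset.Icc 1 n).lcm id := by
      have : p ^ (a - 1) ∈ Finset.Icc 1 n := by
        simp only [Finset.mem_Icc]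
        exact ⟨Nat.one_le_pow _ _ hp'.pos, hle2⟩
      exact Finset.dvd_lcm (f := id) this
    rw [hsplit]
    exact mul_dvd_mul h1 (aux_p_dvd_choose hp' hik hkn hni hi1)

theorem coefficients_integrality (n ρ : ℕ) (hρ : 2 ≤ ρ) (k : ℕ) (hk : k ≤ n) :
    -- θ(t) = (t+n+ρ)/(t-n+1), φ(t) = θ'(t)/θ(t) = 1/(t+n+ρ) - 1/(t-n+1), evaluated at t = -k-1
    let θv : ℚ := ((-(k : ℚ) - 1) + n + ρ) / ((-(k : ℚ) - 1) - n + 1)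
    let φv : ℚ := 1 / ((-(k : ℚ) - 1) + n + ρ) - 1 / ((-(k : ℚ) - 1) - n + 1)
    let H : ℕ → ℚ := fun m => ∑ l ∈ Finset.Icc 1 m, (1 : ℚ) / l
    let b : ℚ := -(((n + k).choose k : ℚ)) ^ 2 * ((n.choose k : ℚ)) ^ 2 * θv
    let a : ℚ := 2 * b * (H (n + k - 1) - 2 * H k + H (n - k) - φv)
    (∃ m : ℤ, (n : ℚ) * b = m) ∧
      (∃ m : ℤ, (n : ℚ) * (((Finset.Icc 1 n).lcm id : ℕ) : ℚ) * a = m) := by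
  dsimp only
  rcases Nat.eq_zero_or_pos n with hn0 | hn
  · have hk0 : k = 0 := by omega
    subst hn0 hk0
    constructor
    · exact ⟨0, by norm_num⟩
    · exact ⟨0, by norm_num⟩
  -- Main case: 1 ≤ n
  set D : ℕ := (Finset.Icc 1 n).lcm id with hDdef
  set r : ℕ := n + ρ - (k + 1) with hrdef
  set C : ℕ := (n + k).choose k with hCdef
  set q : ℕ := n.choose k with hqdef
  set c1 : ℕ := (n + k - 1).choose k with hc1def
  have hkρ : k + 1 ≤ n + ρ := by omega
  have hrQ : (r : ℚ) = (n : ℚ) + ρ - k - 1 := by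
    rw [hrdef, Nat.cast_sub hkρ]; push_cast; ring
  have hnum : -(k : ℚ) - 1 + n + ρ = (r : ℚ) := by rw [hrQ]; ring
  have hden : -(k : ℚ) - 1 - n + 1 = -((n : ℚ) + k) := by ring
  have hN0 : (n : ℚ) + k ≠ 0 := by
    have h1 : (1:ℚ) ≤ (n:ℚ) := by exact_mod_cast hn
    have h2 : (0:ℚ) ≤ (k:ℚ) := by positivity
    linarith
  have hr0 : (r : ℚ) ≠ 0 := by
    have : 1 ≤ r := by omega
    exact_mod_cast Nat.one_le_iff_ne_zero.mp this |> Nat.cast_ne_zero.mpr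
  have hnC : (n : ℚ) * C = ((n : ℚ) + k) * c1 := by
    have h := aux_n_mul_choose n k hn
    exact_mod_cast h
  have hB : (n : ℚ) * (-(C:ℚ) ^ 2 * (q:ℚ) ^ 2 * ((-(k:ℚ) - 1 + n + ρ) / (-(k:ℚ) - 1 - n + 1)))
      = ((c1 * C * q ^ 2 * r : ℕ) : ℚ) := by
    rw [hnum, hden, div_neg]
    have e2 : (n:ℚ) * (-(C:ℚ) ^ 2 * (q:ℚ) ^ 2 * (-((r:ℚ) / ((n:ℚ) + k))))
        = ((n:ℚ) * C / ((n:ℚ) + k)) * ((C:ℚ) * (q:ℚ) ^ 2 * (r:ℚ)) := by ring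
    have e3 : ((n:ℚ) + k) * (c1:ℚ) / ((n:ℚ) + k) = (c1:ℚ) := by
      field_simp
    rw [e2, hnC, e3]
    push_cast
    ring
  have hDH : ∀ m : ℕ, m ≤ n → IsIntQ ((D : ℚ) * ∑ l ∈ Finset.Icc 1 m, (1:ℚ)/l) := by
    intro m hm
    rw [Finset.mul_sum]
    apply isIntQ_sum
    intro l hl
    rw [Finset.mem_Icc] at hl
    have hdvd : l ∣ D := Finset.dvd_lcm (f := id) (Finset.mem_Icc.mpr ⟨hl.1, hl.2.trans hm⟩)
    have he : (D:ℚ) * (1/l) = (D:ℚ)/(l:ℚ) := by ring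
    rw [he]
    exact isIntQ_div hdvd (by omega)
  have hDCdiv : ∀ l : ℕ, 1 ≤ l → l ≤ n + k → IsIntQ (((D * C : ℕ) : ℚ) / (l : ℚ)) := by
    intro l h1 h2
    have hdvd : l ∣ D * C := by
      by_cases hln : l ≤ n
      · exact (Finset.dvd_lcm (f := id) (Finset.mem_Icc.mpr ⟨h1, hln⟩)).mul_right _
      · have h := aux_key n k (l - n) hn (by omega) hk
        rwa [show n + (l - n) = l by omega] at h
    exact isIntQ_div hdvd (by omega)
  have hS2 : IsIntQ ((D:ℚ) * C *
      (∑ l ∈ Finset.Icc 1 (n + k - 1), (1:ℚ)/l - ∑ l ∈ Finset.Icc 1 n, (1:ℚ)/l)) := by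
    rcases Nat.eq_zero_or_pos k with hk0 | hk1
    · subst hk0
      obtain ⟨m, rfl⟩ : ∃ m, n = m + 1 := ⟨n - 1, by omega⟩
      have hC1 : (C:ℚ) = 1 := by rw [hCdef]; simp
      rw [hC1]
      have hidx : m + 1 + 0 - 1 = m := by omega
      rw [hidx]
      have hsum : ∑ l ∈ Finset.Icc 1 (m + 1), (1:ℚ)/l
          = ∑ l ∈ Finset.Icc 1 m, (1:ℚ)/l + 1/((m:ℚ)+1) := by
        rw [Finset.sum_Icc_succ_top (by omega)]
        norm_num
      rw [hsum]
      have he : (D:ℚ) * 1 * (∑ l ∈ Finset.Icc 1 m, (1:ℚ)/l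
          - (∑ l ∈ Finset.Icc 1 m, (1:ℚ)/l + 1/((m:ℚ)+1)))
          = -((D:ℚ)/(((m+1 : ℕ)):ℚ)) := by
        push_cast
        ring
      rw [he]
      have hdvd : (m+1) ∣ D := Finset.dvd_lcm (f := id) (Finset.mem_Icc.mpr ⟨by omega, by omega⟩)
      exact (isIntQ_div hdvd (by omega)).neg
    · have hsplit : ∑ l ∈ Finset.Icc 1 (n + k - 1), (1:ℚ)/l
          = ∑ l ∈ Finset.Icc 1 n, (1:ℚ)/l + ∑ l ∈ Finset.Ioc n (n + k - 1), (1:ℚ)/l := by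
        have e1 : Finset.Icc 1 (n + k - 1) = Finset.Ioc 0 (n + k - 1) := by
          rw [← Finset.Icc_add_one_left_eq_Ioc]
          rfl
        have e2 : Finset.Icc 1 n = Finset.Ioc 0 n := by
          rw [← Finset.Icc_add_one_left_eq_Ioc]
          rfl
        rw [e1, e2, Finset.sum_Ioc_consecutive _ (Nat.zero_le n) (by omega)]
      rw [hsplit, add_sub_cancel_left]
      have he : (D:ℚ) * C * ∑ l ∈ Finset.Ioc n (n + k - 1), (1:ℚ)/l
          = ∑ l ∈ Finset.Ioc n (n + k - 1), ((D * C : ℕ):ℚ)/(l:ℚ) := by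
        rw [Finset.mul_sum]
        refine Finset.sum_congr rfl fun l hl => ?_
        push_cast
        ring
      rw [he]
      apply isIntQ_sum
      intro l hl
      rw [Finset.mem_Ioc] at hl
      exact hDCdiv l (by omega) (by omega)
  have hphi : IsIntQ (((c1 * C * q ^ 2 * r : ℕ):ℚ) * D *
      (1 / (-(k:ℚ) - 1 + n + ρ) - 1 / (-(k:ℚ) - 1 - n + 1))) := by
    rw [hnum, hden, div_neg, sub_neg_eq_add]
    have heq : ((c1 * C * q ^ 2 * r : ℕ):ℚ) * D * (1/(r:ℚ) + 1/((n:ℚ) + k))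
        = ((c1 * C * q ^ 2 * D : ℕ):ℚ)
          + ((c1 * q ^ 2 * r : ℕ):ℚ) * (((D * C : ℕ):ℚ) / (((n + k : ℕ)):ℚ)) := by
      push_cast
      field_simp
    rw [heq]
    exact (isIntQ_natCast _).add ((isIntQ_natCast _).mul (hDCdiv (n + k) (by omega) le_rfl))
  constructor
  · exact ⟨(c1 * C * q ^ 2 * r : ℕ), by exact_mod_cast hB⟩
  · have htwo : IsIntQ (2:ℚ) := ⟨2, by norm_num⟩
    have hS1 : IsIntQ ((D:ℚ) * (∑ l ∈ Finset.Icc 1 n, (1:ℚ)/l)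
        - 2 * ((D:ℚ) * ∑ l ∈ Finset.Icc 1 k, (1:ℚ)/l)
        + (D:ℚ) * ∑ l ∈ Finset.Icc 1 (n - k), (1:ℚ)/l) :=
      ((hDH n le_rfl).sub (htwo.mul (hDH k hk))).add (hDH (n - k) (by omega))
    have hbig : IsIntQ (2 * (((c1 * C * q ^ 2 * r : ℕ):ℚ) *
          ((D:ℚ) * (∑ l ∈ Finset.Icc 1 n, (1:ℚ)/l)
            - 2 * ((D:ℚ) * ∑ l ∈ Finset.Icc 1 k, (1:ℚ)/l)
            + (D:ℚ) * ∑ l ∈ Finset.Icc 1 (n - k), (1:ℚ)/l)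
        + ((c1 * q ^ 2 * r : ℕ):ℚ) * ((D:ℚ) * C *
            (∑ l ∈ Finset.Icc 1 (n + k - 1), (1:ℚ)/l - ∑ l ∈ Finset.Icc 1 n, (1:ℚ)/l))
        - ((c1 * C * q ^ 2 * r : ℕ):ℚ) * D *
            (1 / (-(k:ℚ) - 1 + n + ρ) - 1 / (-(k:ℚ) - 1 - n + 1)))) :=
      htwo.mul ((((isIntQ_natCast _).mul hS1).add ((isIntQ_natCast _).mul hS2)).sub hphi)
    have hX : (n:ℚ) * D * (2 * (-(C:ℚ) ^ 2 * (q:ℚ) ^ 2 *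
          ((-(k:ℚ) - 1 + n + ρ) / (-(k:ℚ) - 1 - n + 1))) *
          (∑ l ∈ Finset.Icc 1 (n + k - 1), (1:ℚ)/l - 2 * ∑ l ∈ Finset.Icc 1 k, (1:ℚ)/l +
              ∑ l ∈ Finset.Icc 1 (n - k), (1:ℚ)/l -
            (1 / (-(k:ℚ) - 1 + n + ρ) - 1 / (-(k:ℚ) - 1 - n + 1))))
        = 2 * (((c1 * C * q ^ 2 * r : ℕ):ℚ) *
          ((D:ℚ) * (∑ l ∈ Finset.Icc 1 n, (1:ℚ)/l)
            - 2 * ((D:ℚ) * ∑ l ∈ Finset.Icc 1 k, (1:ℚ)/l)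
            + (D:ℚ) * ∑ l ∈ Finset.Icc 1 (n - k), (1:ℚ)/l)
        + ((c1 * q ^ 2 * r : ℕ):ℚ) * ((D:ℚ) * C *
            (∑ l ∈ Finset.Icc 1 (n + k - 1), (1:ℚ)/l - ∑ l ∈ Finset.Icc 1 n, (1:ℚ)/l))
        - ((c1 * C * q ^ 2 * r : ℕ):ℚ) * D *
            (1 / (-(k:ℚ) - 1 + n + ρ) - 1 / (-(k:ℚ) - 1 - n + 1))) := by
      have h1 : (n:ℚ) * D * (2 * (-(C:ℚ) ^ 2 * (q:ℚ) ^ 2 *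
            ((-(k:ℚ) - 1 + n + ρ) / (-(k:ℚ) - 1 - n + 1))) * (∑ l ∈ Finset.Icc 1 (n + k - 1), (1:ℚ)/l - 2 * ∑ l ∈ Finset.Icc 1 k, (1:ℚ)/l +
              ∑ l ∈ Finset.Icc 1 (n - k), (1:ℚ)/l -
            (1 / (-(k:ℚ) - 1 + n + ρ) - 1 / (-(k:ℚ) - 1 - n + 1))))
          = 2 * ((n:ℚ) * (-(C:ℚ) ^ 2 * (q:ℚ) ^ 2 *
            ((-(k:ℚ) - 1 + n + ρ) / (-(k:ℚ) - 1 - n + 1)))) * ((D:ℚ) * (∑ l ∈ Finset.Icc 1 (n + k - 1), (1:ℚ)/l - 2 * ∑ l ∈ Finset.Icc 1 k, (1:ℚ)/l +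
              ∑ l ∈ Finset.Icc 1 (n - k), (1:ℚ)/l -
            (1 / (-(k:ℚ) - 1 + n + ρ) - 1 / (-(k:ℚ) - 1 - n + 1)))) := by
        ring
      rw [h1, hB]
      push_cast
      ring
    rw [hX]
    exact hbig
end

section
/- The sequence q_n = ∑_{k=0}^{n} binom(n+k,k)² binom(n,k)² satisfies the Apéry recurrence (n+1)³ q_{n+1} - (2n+1)(17n²+17n+5) q_n + n³ q_{n-1} = 0 for all n ≥ 1, with q_0 = 1 and q_1 = 5. -/
open Finset

private def Fq (n k : ℕ) : ℚ := ((n + k).choose k : ℚ) ^ 2 * (n.choose k : ℚ) ^ 2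

private def Bq (n k : ℕ) : ℚ :=
  4 * (2 * (n : ℚ) + 1) * ((k : ℚ) * (2 * k + 1) - (2 * n + 1) ^ 2) * Fq n k

private def bq (n : ℕ) : ℕ → ℚ
  | 0 => 0
  | (j + 1) => Bq n j

private lemma key (m k : ℕ) (hk : k ≤ m + 2) :
    ((m : ℚ) + 2) ^ 3 * Fq (m + 2) k
      - (2 * (m : ℚ) + 3) * (17 * ((m : ℚ) + 1) ^ 2 + 17 * ((m : ℚ) + 1) + 5) * Fq (m + 1) k
      + ((m : ℚ) + 1) ^ 3 * Fq m k
    = bq (m + 1) (k + 1) - bq (m + 1) k := by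
  rcases k with _ | j
  · simp only [Fq, Bq, bq, Nat.add_zero, Nat.choose_zero_right, Nat.cast_one, Nat.cast_zero]
    push_cast
    ring
  rcases Nat.lt_or_ge j (m + 1) with hj | hj
  · -- main case: j ≤ m
    have hjm : j ≤ m := by omega
    have hjq : (j : ℚ) ≤ m := by exact_mod_cast hjm
    have d1 : ((m : ℚ) + 1 - j) ≠ 0 := by intro h; nlinarith
    have d2 : ((m : ℚ) + 2) ≠ 0 := by positivity
    have d3 : ((m : ℚ) + 1) ≠ 0 := by positivity
    have d4 : ((m : ℚ) + j + 2) ≠ 0 := by positivity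
    simp only [Fq, Bq, bq]
    rw [show m + 2 + (j + 1) = m + j + 3 from by omega,
        show m + 1 + (j + 1) = m + j + 2 from by omega,
        show m + (j + 1) = m + j + 1 from by omega,
        show m + 1 + j = m + j + 1 from by omega]
    have hsub1 : ((m + 1 - j : ℕ) : ℚ) = (m : ℚ) + 1 - j := by
      rw [Nat.cast_sub (by omega)]; push_cast; ring
    have hsub2 : ((m - j : ℕ) : ℚ) = (m : ℚ) - j := by
      rw [Nat.cast_sub hjm]
    have E1 : ((m + j + 3).choose (j + 1) : ℚ) = ((m + j + 2).choose (j + 1) : ℚ) * ((m : ℚ) + j + 3) / ((m : ℚ) + 2) := by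
      rw [eq_div_iff d2]
      have h := Nat.choose_mul_succ_eq (m + j + 2) (j + 1)
      rw [show m + j + 2 + 1 = m + j + 3 from by omega,
          show m + j + 2 + 1 - (j + 1) = m + 2 from by omega] at h
      exact_mod_cast h.symm
    have E2 : ((m + 2).choose (j + 1) : ℚ) = ((m + 1).choose (j + 1) : ℚ) * ((m : ℚ) + 2) / ((m : ℚ) + 1 - j) := by
      rw [eq_div_iff d1]
      have h := Nat.choose_mul_succ_eq (m + 1) (j + 1)
      rw [show m + 1 + 1 = m + 2 from by omega,
          show m + 1 + 1 - (j + 1) = m + 1 - j from by omega] at h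
      rw [← hsub1]
      exact_mod_cast h.symm
    have E3 : ((m + j + 1).choose (j + 1) : ℚ) = ((m + j + 2).choose (j + 1) : ℚ) * ((m : ℚ) + 1) / ((m : ℚ) + j + 2) := by
      rw [eq_div_iff d4]
      have h := Nat.choose_mul_succ_eq (m + j + 1) (j + 1)
      rw [show m + j + 1 + 1 = m + j + 2 from by omega,
          show m + j + 1 + 1 - (j + 1) = m + 1 from by omega] at h
      exact_mod_cast h
    have E4 : (m.choose (j + 1) : ℚ) = ((m + 1).choose (j + 1) : ℚ) * ((m : ℚ) - j) / ((m : ℚ) + 1) := by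
      rw [eq_div_iff d3]
      have h := Nat.choose_mul_succ_eq m (j + 1)
      rw [show m + 1 - (j + 1) = m - j from by omega] at h
      rw [← hsub2]
      exact_mod_cast h
    have E5 : ((m + 1).choose j : ℚ) = ((m + 1).choose (j + 1) : ℚ) * ((j : ℚ) + 1) / ((m : ℚ) + 1 - j) := by
      rw [eq_div_iff d1]
      have h := Nat.choose_succ_right_eq (m + 1) j
      rw [← hsub1]
      exact_mod_cast h.symm
    have E6 : ((m + j + 1).choose j : ℚ) = ((m + j + 2).choose (j + 1) : ℚ) * ((j : ℚ) + 1) / ((m : ℚ) + j + 2) := by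
      rw [eq_div_iff d4]
      have h1 := Nat.choose_succ_right_eq (m + j + 2) j
      rw [show m + j + 2 - j = m + 2 from by omega] at h1
      have h2 := Nat.choose_mul_succ_eq (m + j + 1) j
      rw [show m + j + 1 + 1 = m + j + 2 from by omega,
          show m + j + 2 - j = m + 2 from by omega] at h2
      have h3 : (m + j + 1).choose j * (m + j + 2) = (m + j + 2).choose (j + 1) * (j + 1) := by
        omega
      exact_mod_cast h3
    rw [E1, E2, E3, E4, E5, E6]
    push_cast
    field_simp
    ring
  · -- k = m + 2
    have hj' : j = m + 1 := by omega
    subst hj'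
    rw [show m + 1 + 1 = m + 2 from by omega]
    have hz1 : (m + 1).choose (m + 2) = 0 := Nat.choose_eq_zero_of_lt (by omega)
    have hz2 : m.choose (m + 2) = 0 := Nat.choose_eq_zero_of_lt (by omega)
    simp only [Fq, Bq, bq, hz1, hz2, Nat.choose_self, Nat.cast_zero, Nat.cast_one]
    rw [show m + 2 + (m + 2) = 2 * (m + 2) from by omega,
        show m + 1 + (m + 1) = 2 * (m + 1) from by omega]
    have h := Nat.succ_mul_centralBinom_succ (m + 1)
    rw [Nat.centralBinom, Nat.centralBinom] at h
    rw [show m + 1 + 1 = m + 2 from by omega] at h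
    have hq : ((m : ℚ) + 2) * ((2 * (m + 2)).choose (m + 2) : ℚ)
        = 2 * (2 * ((m : ℚ) + 1) + 1) * ((2 * (m + 1)).choose (m + 1) : ℚ) := by
      exact_mod_cast h
    push_cast
    linear_combination (((m : ℚ) + 2) * ((2 * (m + 2)).choose (m + 2) : ℚ)
      + 2 * (2 * (m : ℚ) + 3) * ((2 * (m + 1)).choose (m + 1) : ℚ)) * ((m : ℚ) + 2) * hq

private lemma main_q (m : ℕ) :
    ((m : ℚ) + 2) ^ 3 * (∑ k ∈ range (m + 2 + 1), Fq (m + 2) k)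
      - (2 * (m : ℚ) + 3) * (17 * ((m : ℚ) + 1) ^ 2 + 17 * ((m : ℚ) + 1) + 5)
        * (∑ k ∈ range (m + 1 + 1), Fq (m + 1) k)
      + ((m : ℚ) + 1) ^ 3 * (∑ k ∈ range (m + 1), Fq m k) = 0 := by
  have h1 : ∑ k ∈ range (m + 2 + 1), (bq (m + 1) (k + 1) - bq (m + 1) k)
      = bq (m + 1) (m + 2 + 1) - bq (m + 1) 0 := Finset.sum_range_sub (bq (m + 1)) (m + 2 + 1)
  have h2 : bq (m + 1) (m + 2 + 1) = 0 := by
    have hz : (m + 1).choose (m + 2) = 0 := Nat.choose_eq_zero_of_lt (by omega)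
    simp [bq, Bq, Fq, hz]
  have h3 : bq (m + 1) 0 = 0 := rfl
  have h4 : ∑ k ∈ range (m + 2 + 1),
      (((m : ℚ) + 2) ^ 3 * Fq (m + 2) k
        - (2 * (m : ℚ) + 3) * (17 * ((m : ℚ) + 1) ^ 2 + 17 * ((m : ℚ) + 1) + 5) * Fq (m + 1) k
        + ((m : ℚ) + 1) ^ 3 * Fq m k) = 0 := by
    rw [Finset.sum_congr rfl fun k hk => key m k (by
      have := Finset.mem_range.mp hk; omega)]
    rw [h1, h2, h3]; ring
  rw [Finset.sum_add_distrib, Finset.sum_sub_distrib, ← Finset.mul_sum, ← Finset.mul_sum,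
    ← Finset.mul_sum] at h4
  have e2 : ∑ k ∈ range (m + 2 + 1), Fq (m + 1) k = ∑ k ∈ range (m + 1 + 1), Fq (m + 1) k := by
    rw [Finset.sum_range_succ]
    have hz : (m + 1).choose (m + 2) = 0 := Nat.choose_eq_zero_of_lt (by omega)
    simp [Fq, hz]
  have e3 : ∑ k ∈ range (m + 2 + 1), Fq m k = ∑ k ∈ range (m + 1), Fq m k := by
    rw [Finset.sum_range_succ, Finset.sum_range_succ]
    have z1 : m.choose (m + 1) = 0 := Nat.choose_eq_zero_of_lt (by omega)
    have z2 : m.choose (m + 2) = 0 := Nat.choose_eq_zero_of_lt (by omega)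
    simp [Fq, z1, z2]
  rw [e2, e3] at h4
  linear_combination h4


theorem apery_numbers_recurrence :
    let q : ℕ → ℤ := fun n => ∑ k ∈ range (n + 1),
      ((n + k).choose k : ℤ) ^ 2 * (n.choose k : ℤ) ^ 2
    q 0 = 1 ∧ q 1 = 5 ∧
      ∀ n : ℕ, 1 ≤ n →
        ((n : ℤ) + 1) ^ 3 * q (n + 1) -
          (2 * n + 1) * (17 * (n : ℤ) ^ 2 + 17 * n + 5) * q n + (n : ℤ) ^ 3 * q (n - 1) = 0 := by
  intro q
  have hcast : ∀ N : ℕ, ((q N : ℤ) : ℚ) = ∑ k ∈ range (N + 1), Fq N k := by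
    intro N
    simp only [q, Fq]
    push_cast
    rfl
  refine ⟨by norm_num [q], by norm_num [q, Finset.sum_range_succ], ?_⟩
  intro n hn
  obtain ⟨m, rfl⟩ : ∃ m, n = m + 1 := ⟨n - 1, by omega⟩
  rw [show m + 1 + 1 = m + 2 from by omega, show m + 1 - 1 = m from by omega]
  rw [← @Int.cast_inj ℚ]
  push_cast
  rw [hcast (m + 2), hcast (m + 1), hcast m]
  linear_combination main_q m
end
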